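/- Let K be a convex body in ℝ^d and let p, p′ be two distinct points in the interior of K. Then there exists exactly one point o in the open line segment between p and p′ such that H_K(o,p) = H_K(o,p′); that is, the (p,p′)-bisector meets the open segment pp′ in a unique point. -/

import Mathlib

/-- `H` is the Hilbert metric of the convex body `K`: `H p p = 0` for interior points,
and for distinct interior points `p, q`, letting `x` and `y` be the boundary points of the
chord of `K` through `p` and `q`, in the order `⟨x, p, q, y⟩`,
`H p q = (1/2) · ln ((‖p - y‖·‖q - x‖)/(‖q - y‖·‖p - x‖))`. -/
def IsHilbertDist {d : ℕ} (K : Set (EuclideanSpace ℝ (Fin d)))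
    (H : EuclideanSpace ℝ (Fin d) → EuclideanSpace ℝ (Fin d) → ℝ) : Prop :=
  (∀ p ∈ interior K, H p p = 0) ∧
  (∀ p ∈ interior K, ∀ q ∈ interior K, p ≠ q →
    ∃ x ∈ frontier K, ∃ y ∈ frontier K,
      p ∈ openSegment ℝ x q ∧ q ∈ openSegment ℝ p y ∧
      H p q = (1 / 2) * Real.log ((‖p - y‖ * ‖q - x‖) / (‖q - y‖ * ‖p - x‖)))

section aux
variable {E : Type*} [NormedAddCommGroup E] [NormedSpace ℝ E]

lemma seg_left' {q r x : E} (h : q ∈ openSegment ℝ x r) :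
    ∃ a : ℝ, a < 0 ∧ x = q + a • (r - q) := by
  obtain ⟨s, t, hs, ht, hst, heq⟩ := h
  refine ⟨-t / s, div_neg_of_neg_of_pos (neg_lt_zero.2 ht) hs, ?_⟩
  have hs' : s ≠ 0 := ne_of_gt hs
  have h1 : s • x = q - t • r := by rw [← heq]; abel
  refine smul_right_injective E hs' ?_
  show s • x = s • (q + (-t / s) • (r - q))
  rw [h1, smul_add, smul_smul, show s * (-t / s) = -t by field_simp,
    show (s:ℝ) = 1 - t from by linarith]
  module

lemma seg_right' {q r y : E} (h : r ∈ openSegment ℝ q y) :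
    ∃ b : ℝ, 1 < b ∧ y = q + b • (r - q) := by
  obtain ⟨s, t, hs, ht, hst, heq⟩ := h
  have ht' : t ≠ 0 := ne_of_gt ht
  refine ⟨1/t, ?_, ?_⟩
  · rw [lt_div_iff₀ ht]; linarith
  · have h1 : t • y = r - s • q := by rw [← heq]; abel
    refine smul_right_injective E ht' ?_
    show t • y = t • (q + (1/t) • (r - q))
    rw [h1, smul_add, smul_smul, show t * (1/t) = 1 by field_simp,
      show (s:ℝ) = 1 - t from by linarith]
    module

lemma ray_unique' {K : Set E} (hK : Convex ℝ K) {c v : E} (hc : c ∈ interior K) {s1 s2 : ℝ}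
    (h1 : 0 < s1) (h2 : 0 < s2)
    (hf1 : c + s1 • v ∈ frontier K) (hf2 : c + s2 • v ∈ frontier K) : s1 = s2 := by
  by_contra hne
  wlog h : s1 < s2 generalizing s1 s2
  · exact this h2 h1 hf2 hf1 (Ne.symm hne) (lt_of_le_of_ne (le_of_not_gt h) (Ne.symm hne))
  have hmem : c + s1 • v ∈ openSegment ℝ c (c + s2 • v) := by
    refine ⟨1 - s1/s2, s1/s2, sub_pos.2 ((div_lt_one h2).2 h), div_pos h1 h2, by ring, ?_⟩
    rw [smul_add, smul_smul, div_mul_cancel₀ _ (ne_of_gt h2)]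
    module
  exact hf1.2 (hK.openSegment_interior_closure_subset_interior hc
    (frontier_subset_closure hf2) hmem)

end aux

lemma Hgen' {d : ℕ} {K : Set (EuclideanSpace ℝ (Fin d))} (hKconv : Convex ℝ K)
    {H : EuclideanSpace ℝ (Fin d) → EuclideanSpace ℝ (Fin d) → ℝ}
    (hH : IsHilbertDist K H)
    {q r : EuclideanSpace ℝ (Fin d)} (hq : q ∈ interior K) (hr : r ∈ interior K)
    (hne : q ≠ r) {a b : ℝ} (ha : a < 0) (hb : 1 < b)
    (hX : q + a • (r - q) ∈ frontier K) (hY : q + b • (r - q) ∈ frontier K) :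
    H q r = (1 / 2) * Real.log ((b * (1 - a)) / ((b - 1) * (-a))) := by
  have hv : r - q ≠ 0 := sub_ne_zero_of_ne (Ne.symm hne)
  have hvn : (0:ℝ) < ‖r - q‖ := norm_pos_iff.2 hv
  obtain ⟨X₁, hX₁f, Y₁, hY₁f, hs1, hs2, hval⟩ := hH.2 q hq r hr hne
  obtain ⟨a₁, ha₁, hX₁e⟩ := seg_left' hs1
  obtain ⟨b₁, hb₁, hY₁e⟩ := seg_right' hs2
  subst hX₁e hY₁e
  have haa : -a₁ = -a := by
    refine ray_unique' hKconv hq (by linarith) (by linarith) (v := -(r - q)) ?_ ?_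
    · have : q + a₁ • (r - q) = q + (-a₁) • (-(r - q)) := by module
      rw [← this]; exact hX₁f
    · have : q + a • (r - q) = q + (-a) • (-(r - q)) := by module
      rw [← this]; exact hX
  have hbb : b₁ = b := ray_unique' hKconv hq (by linarith) (by linarith) hY₁f hY
  have ha' : a₁ = a := neg_injective haa
  rw [ha', hbb] at hval
  have n1 : q - (q + b • (r - q)) = (-b) • (r - q) := by module
  have n2 : r - (q + a • (r - q)) = (1 - a) • (r - q) := by module
  have n3 : r - (q + b • (r - q)) = (1 - b) • (r - q) := by module
  have n4 : q - (q + a • (r - q)) = (-a) • (r - q) := by module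
  have e1 : ‖(-b : ℝ)‖ = b := by rw [Real.norm_eq_abs, abs_neg, abs_of_pos (by linarith)]
  have e2 : ‖(1 - a : ℝ)‖ = 1 - a := by rw [Real.norm_eq_abs, abs_of_pos (by linarith)]
  have e3 : ‖(1 - b : ℝ)‖ = b - 1 := by rw [Real.norm_eq_abs, abs_of_neg (by linarith)]; ring
  have e4 : ‖(-a : ℝ)‖ = -a := by rw [Real.norm_eq_abs, abs_of_pos (by linarith)]
  rw [hval, n1, n2, n3, n4, norm_smul, norm_smul, norm_smul, norm_smul, e1, e2, e3, e4]
  have k1 : ‖r - q‖ ≠ 0 := hvn.ne'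
  have k2 : b - 1 ≠ 0 := ne_of_gt (by linarith)
  have k3 : a ≠ 0 := ne_of_lt ha
  congr 2
  field_simp

set_option maxHeartbeats 1600000 in
/-- The Hilbert bisector of two distinct interior sites `p, p'` meets the open line
segment between them in exactly one point. -/
theorem hilbert_bisector_unique_on_segment {d : ℕ} (K : Set (EuclideanSpace ℝ (Fin d)))
    (hKcomp : IsCompact K) (hKconv : Convex ℝ K) (hKint : (interior K).Nonempty)
    (H : EuclideanSpace ℝ (Fin d) → EuclideanSpace ℝ (Fin d) → ℝ)
    (hH : IsHilbertDist K H)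
    (p p' : EuclideanSpace ℝ (Fin d)) (hp : p ∈ interior K) (hp' : p' ∈ interior K)
    (hne : p ≠ p') :
    ∃! o : EuclideanSpace ℝ (Fin d), o ∈ openSegment ℝ p p' ∧ H o p = H o p' := by
  have hu : p' - p ≠ 0 := sub_ne_zero_of_ne (Ne.symm hne)
  have hun : (0:ℝ) < ‖p' - p‖ := norm_pos_iff.2 hu
  obtain ⟨x, hxf, y, hyf, hpx, hp'y, _⟩ := hH.2 p hp p' hp' hne
  obtain ⟨A, hA, hxe⟩ := seg_left' hpx
  obtain ⟨B, hB, hye⟩ := seg_right' hp'y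
  subst hxe hye
  have hnA : (0:ℝ) < -A := by linarith
  have h1A : (0:ℝ) < 1 - A := by linarith
  have hB1 : (0:ℝ) < B - 1 := by linarith
  have hBp : (0:ℝ) < B := by linarith
  have hsegmem : ∀ t : ℝ, t ∈ Set.Ioo (0:ℝ) 1 → p + t • (p' - p) ∈ openSegment ℝ p p' := by
    intro t ht
    rw [openSegment_eq_image]
    refine ⟨t, ht, ?_⟩
    show (1 - t) • p + t • p' = p + t • (p' - p)
    module
  have hmemint : ∀ t : ℝ, t ∈ Set.Ioo (0:ℝ) 1 → p + t • (p' - p) ∈ interior K := by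
    intro t ht
    exact ((openSegment_subset_segment ℝ p p').trans
      (hKconv.interior.segment_subset hp hp')) (hsegmem t ht)
  have hHop : ∀ t : ℝ, t ∈ Set.Ioo (0:ℝ) 1 →
      H (p + t • (p' - p)) p = (1/2) * Real.log ((t - A) * B / ((-A) * (B - t))) := by
    intro t ht
    have ht0 : (0:ℝ) < t := ht.1
    have ht1 : t < 1 := ht.2
    have ht0' : t ≠ 0 := ne_of_gt ht0
    have hBt : (0:ℝ) < B - t := by linarith
    have hnep : p + t • (p' - p) ≠ p := by
      intro h
      rcases smul_eq_zero.1 (add_eq_left.1 h) with h' | h'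
      · exact ht0' h'
      · exact hu h'
    have ha : (t - B)/t < 0 := div_neg_of_neg_of_pos (by linarith) ht0
    have hb : 1 < (t - A)/t := (one_lt_div ht0).2 (by linarith)
    have hXe : (p + t • (p' - p)) + ((t - B)/t) • (p - (p + t • (p' - p))) = p + B • (p' - p) := by
      rw [show p - (p + t • (p' - p)) = (-t) • (p' - p) by module, smul_smul,
        show (t - B)/t * (-t) = B - t by field_simp [ht0']; ring]
      module
    have hYe : (p + t • (p' - p)) + ((t - A)/t) • (p - (p + t • (p' - p))) = p + A • (p' - p) := by
      rw [show p - (p + t • (p' - p)) = (-t) • (p' - p) by module, smul_smul,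
        show (t - A)/t * (-t) = A - t by field_simp [ht0']; ring]
      module
    have hval := Hgen' hKconv hH (hmemint t ht) hp hnep ha hb
      (by rw [hXe]; exact hyf) (by rw [hYe]; exact hxf)
    rw [hval]
    congr 2
    field_simp
    have k1 : t - B ≠ 0 := (show t - B < 0 by linarith).ne
    have k2 : A ≠ 0 := hA.ne
    rw [show t - (t - B) = B by ring, show t - A - t = -A by ring]
    field_simp
    ring
  have hHop' : ∀ t : ℝ, t ∈ Set.Ioo (0:ℝ) 1 →
      H (p + t • (p' - p)) p' = (1/2) * Real.log ((B - t) * (1 - A) / ((B - 1) * (t - A))) := by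
    intro t ht
    have ht0 : (0:ℝ) < t := ht.1
    have ht1 : t < 1 := ht.2
    have h1t : (0:ℝ) < 1 - t := by linarith
    have h1t' : (1:ℝ) - t ≠ 0 := ne_of_gt h1t
    have htA : (0:ℝ) < t - A := by linarith
    have hnep : p + t • (p' - p) ≠ p' := by
      intro h
      have h0 : (t - 1) • (p' - p) = 0 := by
        rw [show (t - 1) • (p' - p) = (p + t • (p' - p)) - p' by module, h, sub_self]
      rcases smul_eq_zero.1 h0 with h' | h'
      · have : t = 1 := by linarith [sub_eq_zero.1 h']
        linarith
      · exact hu h'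
    have ha : (A - t)/(1 - t) < 0 := div_neg_of_neg_of_pos (by linarith) h1t
    have hb : 1 < (B - t)/(1 - t) := (one_lt_div h1t).2 (by linarith)
    have hXe : (p + t • (p' - p)) + ((A - t)/(1 - t)) • (p' - (p + t • (p' - p)))
        = p + A • (p' - p) := by
      rw [show p' - (p + t • (p' - p)) = (1 - t) • (p' - p) by module, smul_smul,
        show (A - t)/(1 - t) * (1 - t) = A - t by field_simp]
      module
    have hYe : (p + t • (p' - p)) + ((B - t)/(1 - t)) • (p' - (p + t • (p' - p)))
        = p + B • (p' - p) := by
      rw [show p' - (p + t • (p' - p)) = (1 - t) • (p' - p) by module, smul_smul,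
        show (B - t)/(1 - t) * (1 - t) = B - t by field_simp]
      module
    have hval := Hgen' hKconv hH (hmemint t ht) hp' hnep ha hb
      (by rw [hXe]; exact hxf) (by rw [hYe]; exact hyf)
    rw [hval]
    congr 2
    field_simp
    have k1 : A - t ≠ 0 := (show A - t < 0 by linarith).ne
    have k2 : B - 1 ≠ 0 := (show 0 < B - 1 by linarith).ne'
    rw [show 1 - t - (A - t) = 1 - A by ring, show B - t - (1 - t) = B - 1 by ring]
    field_simp
    ring
  set c := Real.sqrt ((-A) * (1 - A)) with hc_def
  set e := Real.sqrt (B * (B - 1)) with he_def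
  have hcpos : 0 < c := Real.sqrt_pos.2 (mul_pos hnA h1A)
  have hepos : 0 < e := Real.sqrt_pos.2 (mul_pos hBp hB1)
  have hc2 : c ^ 2 = (-A) * (1 - A) := Real.sq_sqrt (mul_pos hnA h1A).le
  have he2 : e ^ 2 = B * (B - 1) := Real.sq_sqrt (mul_pos hBp hB1).le
  have hce : (0:ℝ) < c + e := by linarith
  set t₀ := (B * c + A * e) / (c + e) with ht₀_def
  have ht₀lin : t₀ * (c + e) = B * c + A * e := div_mul_cancel₀ _ (ne_of_gt hce)
  have ht₀0 : 0 < t₀ := by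
    have hsq : ((-A) * e) ^ 2 < (B * c) ^ 2 := by
      rw [mul_pow, mul_pow, hc2, he2]
      nlinarith [mul_pos (mul_pos hBp hnA) (show (0:ℝ) < B - A by linarith)]
    have hlt : (-A) * e < B * c := lt_of_pow_lt_pow_left₀ 2 (by positivity) hsq
    exact div_pos (by linarith) hce
  have ht₀1 : t₀ < 1 := by
    have hsq : ((B - 1) * c) ^ 2 < ((1 - A) * e) ^ 2 := by
      rw [mul_pow, mul_pow, hc2, he2]
      nlinarith [mul_pos (mul_pos hB1 h1A) (show (0:ℝ) < B - A by linarith)]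
    have hlt : (B - 1) * c < (1 - A) * e := lt_of_pow_lt_pow_left₀ 2 (by positivity) hsq
    rw [div_lt_one hce]
    nlinarith [hlt]
  have hkey : (t₀ - A) * e = (B - t₀) * c := by linear_combination ht₀lin
  have equiv : ∀ t : ℝ, t ∈ Set.Ioo (0:ℝ) 1 →
      ((H (p + t • (p' - p)) p = H (p + t • (p' - p)) p') ↔ t = t₀) := by
    intro t ht
    have htA : (0:ℝ) < t - A := by linarith [ht.1]
    have hBt : (0:ℝ) < B - t := by linarith [ht.2]
    rw [hHop t ht, hHop' t ht]
    constructor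
    · intro h
      have hlog : Real.log ((t - A) * B / ((-A) * (B - t))) =
          Real.log ((B - t) * (1 - A) / ((B - 1) * (t - A))) := by linarith
      have h' : (t - A) * B / ((-A) * (B - t)) = (B - t) * (1 - A) / ((B - 1) * (t - A)) :=
        Real.log_injOn_pos
          (Set.mem_Ioi.2 (div_pos (mul_pos htA hBp) (mul_pos hnA hBt)))
          (Set.mem_Ioi.2 (div_pos (mul_pos hBt h1A) (mul_pos hB1 htA))) hlog
      rw [div_eq_div_iff (mul_pos hnA hBt).ne' (mul_pos hB1 htA).ne'] at h'
      have hsq : ((t - A) * e) ^ 2 = ((B - t) * c) ^ 2 := by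
        rw [mul_pow, mul_pow, hc2, he2]; linear_combination h'
      have hz : ((t - A) * e - (B - t) * c) * ((t - A) * e + (B - t) * c) = 0 := by
        linear_combination hsq
      have hlin : (t - A) * e = (B - t) * c := by
        rcases mul_eq_zero.1 hz with h0 | h0
        · exact sub_eq_zero.1 h0
        · linarith [mul_pos htA hepos, mul_pos hBt hcpos]
      have hteq : t * (c + e) = B * c + A * e := by linear_combination hlin
      rw [ht₀_def, eq_div_iff (ne_of_gt hce)]
      linear_combination hteq
    · rintro rfl
      have h' : (t₀ - A) * B / ((-A) * (B - t₀)) = (B - t₀) * (1 - A) / ((B - 1) * (t₀ - A)) := by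
        rw [div_eq_div_iff (mul_pos hnA hBt).ne' (mul_pos hB1 htA).ne']
        have hsq : ((t₀ - A) * e) ^ 2 = ((B - t₀) * c) ^ 2 := by rw [hkey]
        rw [mul_pow, mul_pow, hc2, he2] at hsq
        linear_combination hsq
      rw [h']
  refine ⟨p + t₀ • (p' - p), ⟨hsegmem t₀ ⟨ht₀0, ht₀1⟩, (equiv t₀ ⟨ht₀0, ht₀1⟩).2 rfl⟩, ?_⟩
  rintro o ⟨hoseg, hoH⟩
  rw [openSegment_eq_image] at hoseg
  obtain ⟨t, ht, rfl⟩ := hoseg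
  have ho : (fun θ : ℝ => (1 - θ) • p + θ • p') t = p + t • (p' - p) := by
    show (1 - t) • p + t • p' = p + t • (p' - p)
    module
  rw [ho] at hoH ⊢
  rw [(equiv t ht).1 hoH]
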